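/- Let A be a K-algebra over a field K of characteristic zero with elements x, y satisfying x*y − y*x = x. Then for every k ≥ 1: y^k*x*y = (1/(k+1))·x*y^{k+1} + (k/(k+1))·y^{k+1}*x + (1/(k+1))·∑_{i=1}^{k} (−1)^{k+1−i} C(k+1,i)·B_{k+1−i}·x*y^i − (1/(k+1))·∑_{i=1}^{k} (−1)^{k+1−i} C(k+1,i)·B_{k+1−i}·y^i*x. -/

import Mathlib

open Polynomial Finset

theorem polyId (k : ℕ) :
    ((X:ℚ[X]) + 1)^(k+1) - X^(k+1) +
      ∑ i ∈ Finset.Icc 1 k, C (_root_.bernoulli (k+1-i) * ((k+1).choose i : ℚ)) * ((X+1)^i - X^i)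
      = C ((k:ℚ)+1) * X^k := by
  have hB : (Polynomial.bernoulli (k+1)).comp (X + 1) - Polynomial.bernoulli (k+1)
      = C ((k:ℚ)+1) * X^k := by
    apply Polynomial.funext
    intro r
    simp [eval_comp, add_comm (r:ℚ) 1, Polynomial.bernoulli_eval_one_add]
  rw [← hB, Polynomial.bernoulli_def]
  simp only [← C_mul_X_pow_eq_monomial, Polynomial.sum_comp, mul_comp, C_comp, pow_comp, X_comp]
  rw [← Finset.sum_sub_distrib]
  have : ∀ i ∈ range (k+2), C (_root_.bernoulli (k+1-i) * ((k+1).choose i : ℚ)) * (X+1)^i - C (_root_.bernoulli (k+1-i) * ((k+1).choose i : ℚ)) * X^i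
      = C (_root_.bernoulli (k+1-i) * ((k+1).choose i : ℚ)) * ((X+1)^i - X^i) := fun i _ => (mul_sub _ _ _).symm
  rw [Finset.sum_congr rfl this]
  rw [show k+1+1 = k+2 from rfl, Finset.sum_range_succ, Finset.sum_range_succ']
  simp only [Nat.add_sub_cancel, Nat.sub_self, _root_.bernoulli_zero, Nat.choose_self, Nat.cast_one, mul_one, one_mul, C_1, pow_zero, sub_self, mul_zero, add_zero]
  rw [← Finset.Ico_add_one_right_eq_Icc, Finset.sum_Ico_eq_sum_range]
  simp only [Nat.add_sub_cancel, Nat.succ_sub_one, add_comm 1]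
  ring

theorem keyA (K : Type*) (A : Type*) [Field K] [CharZero K] [Ring A] [Algebra K A]
    (y : A) (k : ℕ) :
    (y+1)^(k+1) - y^(k+1) +
      ∑ i ∈ Finset.Icc 1 k,
        ((algebraMap ℚ K (_root_.bernoulli (k+1-i))) * ((k+1).choose i : K)) • ((y+1)^i - y^i)
      = ((k:K)+1) • y^k := by
  have h := congrArg (fun p : ℚ[X] => Polynomial.aeval y (Polynomial.map (algebraMap ℚ K) p)) (polyId k)
  simp only [Polynomial.map_add, Polynomial.map_sub, Polynomial.map_mul, Polynomial.map_pow,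
    Polynomial.map_sum, Polynomial.map_one, Polynomial.map_C, Polynomial.map_X,
    map_add, map_sub, map_mul, map_pow, map_sum, map_one,
    Polynomial.aeval_C, Polynomial.aeval_X, Polynomial.map_natCast, Polynomial.aeval_natCast, map_natCast] at h
  simp only [Algebra.smul_def, map_mul, map_add, map_natCast, map_one]
  exact h

theorem y_pow_xy (K : Type*) (A : Type*) [Field K] [CharZero K] [Ring A] [Algebra K A]
    (x y : A) (h : x * y - y * x = x) (k : ℕ) (hk : 1 ≤ k) :
    y ^ k * x * y =
      ((1 : K) / (k + 1)) • (x * y ^ (k + 1)) + ((k : K) / (k + 1)) • (y ^ (k + 1) * x) +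
      ((1 : K) / (k + 1)) • ∑ i ∈ Finset.Icc 1 k,
        ((-1 : K) ^ (k + 1 - i) * ((k + 1).choose i : K) *
            algebraMap ℚ K (bernoulli' (k + 1 - i))) • (x * y ^ i) -
      ((1 : K) / (k + 1)) • ∑ i ∈ Finset.Icc 1 k,
        ((-1 : K) ^ (k + 1 - i) * ((k + 1).choose i : K) *
            algebraMap ℚ K (bernoulli' (k + 1 - i))) • (y ^ i * x) := by
  have hxy : x * y = (y + 1) * x := by
    have h' : x * y = x + y * x := sub_eq_iff_eq_add.mp h
    rw [h', add_mul, one_mul, add_comm]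
  have hpow : ∀ n : ℕ, x * y ^ n = (y+1)^n * x := by
    intro n
    induction n with
    | zero => simp
    | succ n ih => rw [pow_succ, ← mul_assoc, ih, mul_assoc, hxy, ← mul_assoc, ← pow_succ]
  have hc : ∀ i ∈ Finset.Icc 1 k,
      ((-1 : K) ^ (k + 1 - i) * ((k + 1).choose i : K) * algebraMap ℚ K (bernoulli' (k + 1 - i)))
      = (algebraMap ℚ K (_root_.bernoulli (k+1-i)) * ((k+1).choose i : K)) := by
    intro i _
    rw [bernoulli'_eq_bernoulli, map_mul, map_pow, map_neg, map_one]
    have h1 : ((-1:K))^(k+1-i) * ((-1:K))^(k+1-i) = 1 := by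
      rw [← pow_add, Even.neg_one_pow ⟨k+1-i, rfl⟩]
    linear_combination (((k+1).choose i : K) * algebraMap ℚ K (_root_.bernoulli (k+1-i))) * h1
  simp only [hpow, ← smul_mul_assoc, ← Finset.sum_mul, ← add_mul, ← sub_mul]
  rw [mul_assoc, hxy, ← mul_assoc]
  congr 1
  have hc1 : ∑ i ∈ Finset.Icc 1 k,
      ((-1 : K) ^ (k + 1 - i) * ((k + 1).choose i : K) * algebraMap ℚ K (bernoulli' (k + 1 - i))) • (y+1)^i
      = ∑ i ∈ Finset.Icc 1 k,
      (algebraMap ℚ K (_root_.bernoulli (k+1-i)) * ((k+1).choose i : K)) • (y+1)^i :=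
    Finset.sum_congr rfl (fun i hi => by rw [hc i hi])
  have hc2 : ∑ i ∈ Finset.Icc 1 k,
      ((-1 : K) ^ (k + 1 - i) * ((k + 1).choose i : K) * algebraMap ℚ K (bernoulli' (k + 1 - i))) • y^i
      = ∑ i ∈ Finset.Icc 1 k,
      (algebraMap ℚ K (_root_.bernoulli (k+1-i)) * ((k+1).choose i : K)) • y^i :=
    Finset.sum_congr rfl (fun i hi => by rw [hc i hi])
  rw [hc1, hc2]
  have E := keyA K A y k
  simp only [smul_sub, Finset.sum_sub_distrib] at E
  have hS : (∑ i ∈ Finset.Icc 1 k,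
        (algebraMap ℚ K (_root_.bernoulli (k+1-i)) * ((k+1).choose i : K)) • (y+1)^i)
      = (∑ i ∈ Finset.Icc 1 k,
        (algebraMap ℚ K (_root_.bernoulli (k+1-i)) * ((k+1).choose i : K)) • y^i)
        + (((k:K)+1) • y^k - ((y+1)^(k+1) - y^(k+1))) := by
    rw [← E]; abel
  rw [hS, mul_add, mul_one, ← pow_succ]
  have hk1 : ((k:K)+1) ≠ 0 := Nat.cast_add_one_ne_zero k
  match_scalars <;> field_simp <;> ring
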